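/- Let n > 0 and k be integers and define the Dedekind sum S(k, n) = Σ_{j=1}^{n−1} ((j/n))·((jk/n)), where ((x)) = 0 if x ∈ ℤ and ((x)) = x − ⌊x⌋ − 1/2 otherwise. Then 6n·S(k, n) is an integer. -/

import Mathlib

-- The sawtooth function `((x))` of (0.3): `0` for `x ∈ ℤ`, `x − ⌊x⌋ − 1/2` otherwise.
open Classical in
noncomputable def sawtooth (x : ℝ) : ℝ :=
  if ∃ z : ℤ, (z : ℝ) = x then 0 else x - ⌊x⌋ - 1 / 2

/-- The Dedekind sum `S(k, n) = Σ_{j=1}^{n−1} ((j/n))((jk/n))` of (0.3). -/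
noncomputable def dedekindSum (k n : ℤ) : ℝ :=
  ∑ j ∈ Finset.Ioo (0 : ℤ) n, sawtooth ((j : ℝ) / n) * sawtooth ((j * k : ℝ) / n)

lemma saw_div (a n : ℤ) (hn : 0 < n) :
    sawtooth ((a : ℝ) / n) =
      if n ∣ a then 0 else ((a % n : ℤ) : ℝ) / n - 1 / 2 := by
  have hn0 : (n : ℝ) ≠ 0 := by exact_mod_cast hn.ne'
  set q := a / n with hq
  set r := a % n with hr
  have hqr : n * q + r = a := Int.mul_ediv_add_emod a n
  have hval : (a : ℝ) / n = (q : ℝ) + (r : ℝ) / n := by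
    field_simp
    push_cast [← hqr]
    ring
  by_cases hd : n ∣ a
  · have hr0 : r = 0 := Int.emod_eq_zero_of_dvd hd
    rw [if_pos hd]
    rw [sawtooth, if_pos]
    exact ⟨q, by rw [hval, hr0]; simp⟩
  · have hr0 : r ≠ 0 := fun h => hd (Int.dvd_of_emod_eq_zero h)
    have hrpos : 0 < r := lt_of_le_of_ne (Int.emod_nonneg a hn.ne') (Ne.symm hr0)
    have hrlt : r < n := Int.emod_lt_of_pos a hn
    rw [if_neg hd, sawtooth, if_neg, hval]
    · have hfl : ⌊(q : ℝ) + (r : ℝ) / n⌋ = q := by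
        rw [Int.floor_intCast_add]
        have : ⌊(r : ℝ) / n⌋ = 0 := by
          rw [Int.floor_eq_zero_iff]
          constructor
          · positivity
          · rw [div_lt_one (by exact_mod_cast hn)]
            exact_mod_cast hrlt
        omega
      rw [hfl]
      ring
    · rintro ⟨z, hz⟩
      rw [hval] at hz
      have : ((z - q) * n : ℤ) = (r : ℝ) := by
        push_cast
        field_simp at hz ⊢
        linarith [hz]
      have h2 : (z - q) * n = r := by exact_mod_cast this
      have : n ∣ r := ⟨z - q, by linarith [h2]⟩
      have := Int.le_of_dvd hrpos this
      omega

lemma six_sum_sq (m : ℕ) :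
    6 * ∑ i ∈ Finset.range m, (i : ℤ) ^ 2 = m * (m - 1) * (2 * m - 1) := by
  induction m with
  | zero => simp
  | succ m ih =>
    rw [Finset.sum_range_succ, mul_add, ih]
    push_cast
    ring

lemma six_sum_sq_Ioo (n : ℤ) (hn : 0 < n) :
    6 * ∑ j ∈ Finset.Ioo (0 : ℤ) n, j ^ 2 = n * (n - 1) * (2 * n - 1) := by
  have h0 : ∑ j ∈ Finset.Ioo (0 : ℤ) n, j ^ 2 = ∑ j ∈ Finset.Ico (0 : ℤ) n, j ^ 2 := by
    rw [← Finset.Ioo_insert_left hn, Finset.sum_insert (by simp)]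
    simp
  have h : ∑ j ∈ Finset.Ico (0 : ℤ) n, j ^ 2
      = ∑ i ∈ Finset.range n.toNat, (i : ℤ) ^ 2 := by
    refine Finset.sum_nbij' (fun j => j.toNat) (fun i => (i : ℤ)) ?_ ?_ ?_ ?_ ?_
    · intro j hj
      simp only [Finset.mem_Ico] at hj
      simp only [Finset.mem_range]
      omega
    · intro i hi
      simp only [Finset.mem_range] at hi
      simp only [Finset.mem_Ico]
      omega
    · intro j hj
      simp only [Finset.mem_Ico] at hj
      omega
    · intro i _; simp
    · intro j hj
      simp only [Finset.mem_Ico] at hj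
      rw [Int.toNat_of_nonneg hj.1]
  rw [h0, h, six_sum_sq]
  have : ((n.toNat : ℤ)) = n := Int.toNat_of_nonneg hn.le
  rw [this]

/-- Equation (0.3): `S(k, n) ∈ (1/(6n))·ℤ`, i.e. `6n·S(k, n)` is an integer. -/
theorem stmt5 (k n : ℤ) (hn : 0 < n) :
    ∃ z : ℤ, 6 * (n : ℝ) * dedekindSum k n = z := by
  have hn0 : (n : ℝ) ≠ 0 := by exact_mod_cast hn.ne'
  set Z : ℤ := ∑ j ∈ Finset.Ioo (0 : ℤ) n,
      (if n ∣ j * k then 0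
       else 12 * j * (j * k % n) - 6 * n * j - 6 * n * (j * k % n) + 3 * n ^ 2)
    with hZ
  -- Step A: (Z : ℝ) = 12 n² S
  have stepA : (Z : ℝ) = 12 * (n : ℝ) ^ 2 * dedekindSum k n := by
    rw [dedekindSum, Finset.mul_sum, hZ, Int.cast_sum]
    apply Finset.sum_congr rfl
    intro j hj
    simp only [Finset.mem_Ioo] at hj
    have hj1 : sawtooth ((j : ℝ) / n) = (j : ℝ) / n - 1 / 2 := by
      rw [saw_div j n hn, if_neg]
      · rw [Int.emod_eq_of_lt hj.1.le hj.2]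
      · intro hd
        have := Int.le_of_dvd hj.1 hd
        omega
    have hcast : ((j : ℝ) * k) / n = ((j * k : ℤ) : ℝ) / n := by push_cast; ring
    rw [hj1, hcast, saw_div (j * k) n hn]
    by_cases hd : n ∣ j * k
    · rw [if_pos hd, if_pos hd]
      simp
    · rw [if_neg hd, if_neg hd]
      push_cast
      field_simp
      ring
  -- Step B: 2n ∣ Z
  have stepB : 2 * n ∣ Z := by
    set c : ℤ → ℤ := fun j => 12 * k * j ^ 2 + (if n ∣ j * k then 0 else n ^ 2)
      with hc
    have hterm : ∀ j ∈ Finset.Ioo (0 : ℤ) n,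
        2 * n ∣ ((if n ∣ j * k then 0
          else 12 * j * (j * k % n) - 6 * n * j - 6 * n * (j * k % n) + 3 * n ^ 2)
          - c j) := by
      intro j _
      have hqr : n * (j * k / n) + j * k % n = j * k := Int.mul_ediv_add_emod (j * k) n
      by_cases hd : n ∣ j * k
      · rw [if_pos hd]
        simp only [hc, if_pos hd]
        obtain ⟨m, hm⟩ := hd
        refine ⟨-6 * j * m, ?_⟩
        linear_combination (-12 * j) * hm
      · rw [if_neg hd]
        simp only [hc, if_neg hd]
        refine ⟨-6 * j * (j * k / n) - 3 * j - 3 * (j * k % n) + n, ?_⟩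
        linear_combination (12 * j) * hqr
    have hdiff : 2 * n ∣ Z - ∑ j ∈ Finset.Ioo (0 : ℤ) n, c j := by
      rw [hZ, ← Finset.sum_sub_distrib]
      exact Finset.dvd_sum hterm
    have hsum : 2 * n ∣ ∑ j ∈ Finset.Ioo (0 : ℤ) n, c j := by
      have hsplit : ∑ j ∈ Finset.Ioo (0 : ℤ) n, c j
          = 12 * k * (∑ j ∈ Finset.Ioo (0 : ℤ) n, j ^ 2)
            + ((Finset.Ioo (0 : ℤ) n).filter (fun j => ¬ n ∣ j * k)).card * n ^ 2 := by
        rw [hc, Finset.sum_add_distrib, Finset.mul_sum]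
        congr 1
        have h1 : (∑ x ∈ Finset.Ioo (0 : ℤ) n, if n ∣ x * k then (0:ℤ) else n ^ 2)
            = ∑ x ∈ (Finset.Ioo (0 : ℤ) n).filter (fun j => ¬ n ∣ j * k), (n:ℤ) ^ 2 := by
          rw [Finset.sum_filter]
          apply Finset.sum_congr rfl
          intro x _
          by_cases h : n ∣ x * k <;> simp [h]
        rw [h1, Finset.sum_const, nsmul_eq_mul]
      rw [hsplit]
      apply dvd_add
      · -- 2n ∣ 12k Σ j²
        have := six_sum_sq_Ioo n hn
        refine ⟨k * (n - 1) * (2 * n - 1), ?_⟩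
        have : 12 * k * ∑ j ∈ Finset.Ioo (0 : ℤ) n, j ^ 2
            = 2 * k * (6 * ∑ j ∈ Finset.Ioo (0 : ℤ) n, j ^ 2) := by ring
        rw [this, six_sum_sq_Ioo n hn]
        ring
      · -- 2n ∣ card * n²
        set A := (Finset.Ioo (0 : ℤ) n).filter (fun j => ¬ n ∣ j * k) with hA
        have heven : Even ((n : ℤ) * A.card) := by
          rcases Int.even_or_odd n with he | ho
          · exact he.mul_right _
          · have hcard : Even (A.card) := by
              have hprod : ∏ _j ∈ A, (-1 : ℤ) = 1 := by
                apply Finset.prod_involution (fun j _ => n - j)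
                · intro j _; ring
                · intro j hj _
                  simp only [hA, Finset.mem_filter, Finset.mem_Ioo] at hj
                  rcases ho with ⟨m, hm⟩
                  omega
                · intro j hj
                  simp only [hA, Finset.mem_filter, Finset.mem_Ioo] at hj ⊢
                  refine ⟨⟨by omega, by omega⟩, ?_⟩
                  intro hd
                  apply hj.2
                  have : j * k = n * k - (n - j) * k := by ring
                  rw [this]
                  exact dvd_sub ⟨k, rfl⟩ hd
                · intro j hj; ring
              rw [Finset.prod_const] at hprod
              rwa [neg_one_pow_eq_one_iff_even (by norm_num)] at hprod
            exact hcard.natCast.mul_left _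
        obtain ⟨m, hm⟩ := heven
        refine ⟨m, ?_⟩
        have : (A.card : ℤ) * n ^ 2 = (n * A.card) * n := by ring
        rw [this, hm]
        ring
    have := dvd_add hdiff hsum
    simpa using this
  -- Step C
  obtain ⟨w, hw⟩ := stepB
  refine ⟨w, ?_⟩
  have : ((2 : ℝ) * n) * ((w : ℝ)) = (2 * n) * (6 * n * dedekindSum k n) := by
    have hZR : (Z : ℝ) = 2 * n * w := by exact_mod_cast congrArg (Int.cast : ℤ → ℝ) hw
    rw [← hZR, stepA]
    ring
  have h2n : (2 : ℝ) * n ≠ 0 := by positivity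
  exact (mul_left_cancel₀ h2n this).symm
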